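/- For all natural numbers m and n and all real t, H_{m,n}(t) = m!·n!·(1/√2)^{m+n} · Σ_{j=0}^{n} Σ_{k=j}^{m} ((−1)^j / (j!·(k−j)!)) · H_{k−j}(0) · (H_{m−k,n−j}(√2·t) / ((m−k)!·(n−j)!)), where H_r = H_{r,0} denotes the physicists' Hermite polynomial. -/

import Mathlib

open Polynomial Finset

/-- The operator `A p = 2·X·p − p′`. -/
noncomputable def A (p : ℝ[X]) : ℝ[X] := 2 * X * p - derivative p

/-- The two-index Hermite polynomial `H_{m,n} = A^m (X^n)`. -/
noncomputable def H (m n : ℕ) : ℝ[X] := A^[m] (X ^ n)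

lemma A_add (p q : ℝ[X]) : A (p + q) = A p + A q := by
  simp only [A, derivative_add]; ring

lemma A_C_mul (a : ℝ) (p : ℝ[X]) : A (C a * p) = C a * A p := by
  simp only [A, derivative_C_mul]; ring

lemma A_iter_C_mul (m : ℕ) (a : ℝ) (p : ℝ[X]) : A^[m] (C a * p) = C a * A^[m] p := by
  induction m with
  | zero => simp
  | succ k ihk => rw [Function.iterate_succ_apply', ihk, A_C_mul, ← Function.iterate_succ_apply' A k p]

lemma deriv_A (p : ℝ[X]) : derivative (A p) = A (derivative p) + C 2 * p := by
  have h2 : (C (2:ℝ)) = (2:ℝ[X]) := map_ofNat C 2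
  rw [h2]
  simp only [A, derivative_sub, derivative_mul, derivative_X, derivative_ofNat]
  ring

lemma deriv_A_iter (m : ℕ) (p : ℝ[X]) :
    derivative (A^[m] p) = A^[m] (derivative p) + C (2*(m:ℝ)) * A^[m-1] p := by
  induction m with
  | zero => simp
  | succ k ihk =>
    rw [Function.iterate_succ_apply', deriv_A, ihk, A_add, A_C_mul]
    cases k with
    | zero => simp
    | succ k' =>
      rw [show k' + 1 - 1 = k' from rfl,
        ← Function.iterate_succ_apply' A k' p,
        ← Function.iterate_succ_apply' A (k'+1) (derivative p)]
      have : (2*((k':ℝ)+1+1)) = 2*((k':ℝ)+1) + 2 := by ring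
      push_cast
      rw [this, C_add]
      have h2 : (C (2:ℝ) : ℝ[X]) = 2 := map_ofNat C 2
      rw [h2]; ring

lemma deriv_H (m n : ℕ) :
    derivative (H m n) = C (n:ℝ) * H m (n-1) + C (2*(m:ℝ)) * H (m-1) n := by
  rw [H, deriv_A_iter, derivative_X_pow, A_iter_C_mul, H, H]

lemma eval_H_succ (m n : ℕ) (y : ℝ) :
    (H (m+1) n).eval y = 2*y*(H m n).eval y - (n:ℝ)*(H m (n-1)).eval y
      - 2*(m:ℝ)*(H (m-1) n).eval y := by
  have h1 : H (m+1) n = A (H m n) := Function.iterate_succ_apply' A m (X^n)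
  rw [h1, A, deriv_H]
  simp only [eval_sub, eval_add, eval_mul, eval_ofNat, eval_X, eval_C]
  ring

lemma H00 : (H 0 0).eval 0 = (1:ℝ) := by simp [H]

lemma H10 : (H 1 0).eval 0 = (0:ℝ) := by
  rw [eval_H_succ]; simp

lemma Hrec0 (r : ℕ) : (H (r+2) 0).eval 0 = -2*((r:ℝ)+1)*(H r 0).eval 0 := by
  rw [eval_H_succ (r+1) 0 0]
  push_cast
  simp only [Nat.cast_zero, zero_mul, mul_zero, zero_sub, Nat.add_sub_cancel]
  ring

noncomputable def cc (j r : ℕ) : ℝ :=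
  (-1:ℝ)^j / ((j.factorial:ℝ) * ((r.factorial:ℝ))) * (H r 0).eval 0

noncomputable def gg (a b : ℕ) (y : ℝ) : ℝ :=
  (H a b).eval y / ((a.factorial:ℝ) * (b.factorial:ℝ))

noncomputable def DD (m n : ℕ) (y : ℝ) : ℝ :=
  ∑ j ∈ range (n+1), ∑ k ∈ Icc j m, cc j (k-j) * gg (m-k) (n-j) y

lemma fac_ne (n : ℕ) : ((n.factorial : ℝ)) ≠ 0 :=
  Nat.cast_ne_zero.mpr (Nat.factorial_ne_zero n)

lemma cc_j (j r : ℕ) : ((j:ℝ)+1) * cc (j+1) r = -(cc j r) := by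
  rw [cc, cc, Nat.factorial_succ, pow_succ]
  push_cast
  have := fac_ne j; have := fac_ne r
  field_simp

lemma cc_r (j r : ℕ) : ((r:ℝ)+2) * cc j (r+2) = -2 * cc j r := by
  rw [cc, cc, Hrec0, show r+2 = (r+1)+1 from rfl, Nat.factorial_succ, Nat.factorial_succ]
  push_cast
  have := fac_ne j; have := fac_ne r
  field_simp
  ring

lemma cc_one (j : ℕ) : cc j 1 = 0 := by rw [cc, H10]; ring

lemma cc_zero : cc 0 0 = 1 := by rw [cc, H00]; norm_num

lemma gg_rec (a b : ℕ) (y : ℝ) :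
    ((a:ℝ)+1) * gg (a+1) b y =
      2*y*gg a b y - (if b = 0 then 0 else gg a (b-1) y)
        - (if a = 0 then 0 else 2 * gg (a-1) b y) := by
  rcases b with _ | b'
  · rcases a with _ | a'
    · simp only [gg, eval_H_succ, Nat.factorial_succ, Nat.factorial_zero, Nat.succ_sub_one,
        reduceIte, Nat.zero_sub, Nat.sub_zero]
      push_cast
      field_simp
      try ring
    · have := fac_ne (a'+1)
      simp only [gg, eval_H_succ, Nat.factorial_succ, Nat.factorial_zero, Nat.succ_sub_one,
        reduceIte, Nat.succ_ne_zero, ite_false, Nat.zero_sub, Nat.sub_zero, if_false]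
      push_cast
      have := fac_ne a'
      field_simp
      try ring
  · rcases a with _ | a'
    · have := fac_ne (b'+1)
      simp only [gg, eval_H_succ, Nat.factorial_succ, Nat.factorial_zero, Nat.succ_sub_one,
        reduceIte, Nat.succ_ne_zero, ite_false, Nat.zero_sub, Nat.sub_zero, if_false]
      push_cast
      have := fac_ne b'
      field_simp
      try ring
    · have := fac_ne (b'+1); have := fac_ne (a'+1)
      simp only [gg, eval_H_succ, Nat.factorial_succ, Nat.factorial_zero, Nat.succ_sub_one,
        reduceIte, Nat.succ_ne_zero, ite_false, Nat.zero_sub, Nat.sub_zero, if_false]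
      push_cast
      have := fac_ne a'; have := fac_ne b'
      field_simp
      try ring

lemma sum1_eq (m n : ℕ) (y : ℝ) :
    ∑ j ∈ range (n+1), ∑ k ∈ Icc j (m+1), (j:ℝ) * (cc j (k-j) * gg (m+1-k) (n-j) y)
      = -(if n = 0 then 0 else DD m (n-1) y) := by
  rw [Finset.sum_range_succ']
  simp only [Nat.cast_zero, zero_mul, Finset.sum_const_zero, add_zero]
  cases n with
  | zero => simp
  | succ n' =>
    rw [if_neg (Nat.succ_ne_zero n'), Nat.succ_sub_one, DD, ← Finset.sum_neg_distrib]
    refine Finset.sum_congr rfl ?_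
    intro j hj
    have hIcc : Icc (j+1) (m+1) = (Icc j m).map (addRightEmbedding 1) := by
      rw [Finset.map_add_right_Icc]
    rw [hIcc, Finset.sum_map, ← Finset.sum_neg_distrib]
    refine Finset.sum_congr rfl ?_
    intro k hk
    simp only [addRightEmbedding_apply]
    have h1 : k + 1 - (j+1) = k - j := by omega
    have h2 : m + 1 - (k+1) = m - k := by omega
    have h3 : n' + 1 - (j+1) = n' - j := by omega
    rw [h1, h2, h3]
    push_cast
    linear_combination (gg (m-k) (n'-j) y) * cc_j j (k-j)

lemma sum2_eq (m n : ℕ) (y : ℝ) :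
    ∑ j ∈ range (n+1), ∑ k ∈ Icc j (m+1), ((k-j : ℕ):ℝ) * (cc j (k-j) * gg (m+1-k) (n-j) y)
      = -(if m = 0 then 0 else 2 * DD (m-1) n y) := by
  cases m with
  | zero =>
    rw [if_pos rfl, neg_zero]
    refine Finset.sum_eq_zero ?_
    intro j hj
    refine Finset.sum_eq_zero ?_
    intro k hk
    have hm := Finset.mem_Icc.mp hk
    have h : k - j = 0 ∨ k - j = 1 := by omega
    rcases h with h | h <;> rw [h]
    · simp
    · rw [cc_one]; ring
  | succ m' =>
    rw [if_neg (Nat.succ_ne_zero m'), Nat.succ_sub_one, DD]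
    rw [show -(2 * ∑ j ∈ range (n+1), ∑ k ∈ Icc j m', cc j (k-j) * gg (m'-k) (n-j) y)
        = ∑ j ∈ range (n+1), ∑ k ∈ Icc j m', (-2:ℝ) * (cc j (k-j) * gg (m'-k) (n-j) y) from by
      rw [Finset.mul_sum, ← Finset.sum_neg_distrib]
      refine Finset.sum_congr rfl ?_
      intro j hj
      rw [Finset.mul_sum, ← Finset.sum_neg_distrib]
      exact Finset.sum_congr rfl fun k hk => by ring]
    refine Finset.sum_congr rfl ?_
    intro j hj
    rw [show (∑ k ∈ Icc j (m'+1+1), ((k-j : ℕ):ℝ) * (cc j (k-j) * gg (m'+1+1-k) (n-j) y))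
        = ∑ k ∈ Icc (j+2) (m'+2), ((k-j : ℕ):ℝ) * (cc j (k-j) * gg (m'+1+1-k) (n-j) y) from ?_]
    · have hIcc : Icc (j+2) (m'+2) = (Icc j m').map (addRightEmbedding 2) := by
        rw [Finset.map_add_right_Icc]
      rw [hIcc, Finset.sum_map]
      refine Finset.sum_congr rfl ?_
      intro k hk
      have hm := Finset.mem_Icc.mp hk
      simp only [addRightEmbedding_apply]
      have h1 : k + 2 - j = (k - j) + 2 := by omega
      have h2 : m' + 1 + 1 - (k+2) = m' - k := by omega
      rw [h1, h2]
      push_cast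
      linear_combination (gg (m'-k) (n-j) y) * cc_r j (k-j)
    · refine (Finset.sum_subset (Finset.Icc_subset_Icc_left (by omega)) ?_).symm
      intro k hk hk2
      have hm := Finset.mem_Icc.mp hk
      have hm2 : ¬ (j + 2 ≤ k ∧ k ≤ m' + 2) := by
        intro hc; exact hk2 (Finset.mem_Icc.mpr hc)
      have h : k - j = 0 ∨ k - j = 1 := by omega
      rcases h with h | h <;> rw [h]
      · simp
      · rw [cc_one]; ring

lemma sum3_eq (m n : ℕ) (y : ℝ) :
    ∑ j ∈ range (n+1), ∑ k ∈ Icc j (m+1), ((m+1-k : ℕ):ℝ) * (cc j (k-j) * gg (m+1-k) (n-j) y)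
      = 2*y*DD m n y - (if m = 0 then 0 else 2 * DD (m-1) n y)
        - (if n = 0 then 0 else DD m (n-1) y) := by
  have step1 : ∑ j ∈ range (n+1), ∑ k ∈ Icc j (m+1),
        ((m+1-k : ℕ):ℝ) * (cc j (k-j) * gg (m+1-k) (n-j) y)
      = ∑ j ∈ range (n+1), ∑ k ∈ Icc j m,
        ((m+1-k : ℕ):ℝ) * (cc j (k-j) * gg (m+1-k) (n-j) y) := by
    refine Finset.sum_congr rfl ?_
    intro j hj
    refine (Finset.sum_subset (Finset.Icc_subset_Icc_right (Nat.le_succ m)) ?_).symm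
    intro k hk hk2
    have h1 := Finset.mem_Icc.mp hk
    have h2 : ¬ (j ≤ k ∧ k ≤ m) := fun hc => hk2 (Finset.mem_Icc.mpr hc)
    have h3 : m + 1 - k = 0 := by omega
    rw [h3]
    simp
  have step2 : ∑ j ∈ range (n+1), ∑ k ∈ Icc j m,
        ((m+1-k : ℕ):ℝ) * (cc j (k-j) * gg (m+1-k) (n-j) y)
      = ∑ j ∈ range (n+1), ∑ k ∈ Icc j m,
          (2*y*(cc j (k-j) * gg (m-k) (n-j) y)
            - cc j (k-j) * (if n-j = 0 then 0 else gg (m-k) ((n-j)-1) y)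
            - cc j (k-j) * (if m-k = 0 then 0 else 2 * gg ((m-k)-1) (n-j) y)) := by
    refine Finset.sum_congr rfl ?_
    intro j hj
    refine Finset.sum_congr rfl ?_
    intro k hk
    have h1 := Finset.mem_Icc.mp hk
    have ha : m + 1 - k = (m-k)+1 := by omega
    rw [ha]
    push_cast
    linear_combination (cc j (k-j)) * gg_rec (m-k) (n-j) y
  rw [step1, step2]
  simp only [Finset.sum_sub_distrib]
  have e3a : ∑ j ∈ range (n+1), ∑ k ∈ Icc j m, 2*y*(cc j (k-j) * gg (m-k) (n-j) y)
      = 2*y*DD m n y := by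
    rw [DD]; simp only [← Finset.mul_sum]
  have e3b : ∑ j ∈ range (n+1), ∑ k ∈ Icc j m,
        cc j (k-j) * (if n-j = 0 then 0 else gg (m-k) ((n-j)-1) y)
      = if n = 0 then 0 else DD m (n-1) y := by
    cases n with
    | zero =>
      rw [if_pos rfl]
      refine Finset.sum_eq_zero ?_
      intro j hj
      refine Finset.sum_eq_zero ?_
      intro k hk
      rw [if_pos (by omega)]
      ring
    | succ n' =>
      rw [if_neg (Nat.succ_ne_zero n'), Nat.succ_sub_one, DD, Finset.sum_range_succ]
      have hlast : ∑ k ∈ Icc (n'+1) m,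
          cc (n'+1) (k-(n'+1)) * (if n'+1-(n'+1) = 0 then 0 else gg (m-k) ((n'+1-(n'+1))-1) y) = 0 := by
        refine Finset.sum_eq_zero ?_
        intro k hk
        rw [if_pos (by omega)]
        ring
      rw [hlast, add_zero]
      refine Finset.sum_congr rfl ?_
      intro j hj
      have hj' : j < n' + 1 := Finset.mem_range.mp hj
      refine Finset.sum_congr rfl ?_
      intro k hk
      rw [if_neg (by omega), show (n'+1-j)-1 = n'-j from by omega]
  have e3c : ∑ j ∈ range (n+1), ∑ k ∈ Icc j m,
        cc j (k-j) * (if m-k = 0 then 0 else 2 * gg ((m-k)-1) (n-j) y)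
      = if m = 0 then 0 else 2 * DD (m-1) n y := by
    cases m with
    | zero =>
      rw [if_pos rfl]
      refine Finset.sum_eq_zero ?_
      intro j hj
      refine Finset.sum_eq_zero ?_
      intro k hk
      have h1 := Finset.mem_Icc.mp hk
      rw [if_pos (by omega)]
      ring
    | succ m' =>
      rw [if_neg (Nat.succ_ne_zero m'), Nat.succ_sub_one, DD]
      rw [show (2 * ∑ j ∈ range (n+1), ∑ k ∈ Icc j m', cc j (k-j) * gg (m'-k) (n-j) y)
          = ∑ j ∈ range (n+1), ∑ k ∈ Icc j m', (2:ℝ) * (cc j (k-j) * gg (m'-k) (n-j) y) from by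
        simp only [← Finset.mul_sum]]
      refine Finset.sum_congr rfl ?_
      intro j hj
      rw [show (∑ k ∈ Icc j (m'+1),
            cc j (k-j) * (if m'+1-k = 0 then 0 else 2 * gg ((m'+1-k)-1) (n-j) y))
          = ∑ k ∈ Icc j m',
            cc j (k-j) * (if m'+1-k = 0 then 0 else 2 * gg ((m'+1-k)-1) (n-j) y) from by
        refine (Finset.sum_subset (Finset.Icc_subset_Icc_right (Nat.le_succ m')) ?_).symm
        intro k hk hk2
        have h1 := Finset.mem_Icc.mp hk
        have h2 : ¬ (j ≤ k ∧ k ≤ m') := fun hc => hk2 (Finset.mem_Icc.mpr hc)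
        rw [if_pos (by omega)]
        ring]
      refine Finset.sum_congr rfl ?_
      intro k hk
      have h1 := Finset.mem_Icc.mp hk
      rw [if_neg (by omega), show (m'+1-k)-1 = m'-k from by omega]
      ring
  rw [e3a, e3b, e3c]
  ring

lemma DD_rec (m n : ℕ) (y : ℝ) :
    ((m:ℝ)+1) * DD (m+1) n y =
      2*y*DD m n y - (if m = 0 then 0 else 4 * DD (m-1) n y)
        - (if n = 0 then 0 else 2 * DD m (n-1) y) := by
  have hsplit : ((m:ℝ)+1) * DD (m+1) n y
      = (∑ j ∈ range (n+1), ∑ k ∈ Icc j (m+1), (j:ℝ) * (cc j (k-j) * gg (m+1-k) (n-j) y))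
        + (∑ j ∈ range (n+1), ∑ k ∈ Icc j (m+1), ((k-j:ℕ):ℝ) * (cc j (k-j) * gg (m+1-k) (n-j) y))
        + (∑ j ∈ range (n+1), ∑ k ∈ Icc j (m+1), ((m+1-k:ℕ):ℝ) * (cc j (k-j) * gg (m+1-k) (n-j) y)) := by
    rw [DD, Finset.mul_sum]
    rw [← Finset.sum_add_distrib, ← Finset.sum_add_distrib]
    refine Finset.sum_congr rfl ?_
    intro j hj
    rw [Finset.mul_sum, ← Finset.sum_add_distrib, ← Finset.sum_add_distrib]
    refine Finset.sum_congr rfl ?_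
    intro k hk
    have h1 := Finset.mem_Icc.mp hk
    have e1 : ((k-j:ℕ):ℝ) = (k:ℝ) - (j:ℝ) := by rw [Nat.cast_sub h1.1]
    have e2 : ((m+1-k:ℕ):ℝ) = ((m:ℝ)+1) - (k:ℝ) := by
      rw [Nat.cast_sub h1.2]; push_cast; ring
    rw [e1, e2]
    ring
  rw [hsplit, sum1_eq, sum2_eq, sum3_eq]
  split_ifs <;> ring

lemma key : ∀ m n : ℕ, ∀ t : ℝ,
    (Real.sqrt 2)^(m+n) * (H m n).eval t
      = (m.factorial : ℝ) * (n.factorial : ℝ) * DD m n (Real.sqrt 2 * t) := by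
  intro m
  induction m using Nat.strong_induction_on with
  | _ m ih =>
    match m with
    | 0 =>
      intro n t
      have hDD : DD 0 n (Real.sqrt 2 * t) = (Real.sqrt 2 * t)^n / (n.factorial:ℝ) := by
        rw [DD, Finset.sum_eq_single_of_mem 0 (Finset.mem_range.mpr (Nat.succ_pos n))]
        · rw [Finset.Icc_self, Finset.sum_singleton, cc_zero, gg]
          simp [H]
        · intro j hj hj0
          rw [Finset.Icc_eq_empty (by omega), Finset.sum_empty]
      rw [hDD]
      have : (H 0 n).eval t = t^n := by simp [H]
      rw [this]
      rw [zero_add, Nat.factorial_zero]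
      rw [mul_pow]
      have := fac_ne n
      field_simp
      simp
    | (m''+1) =>
      intro n t
      have hd := DD_rec m'' n (Real.sqrt 2 * t)
      have IH1 := ih m'' (by omega) n t
      rw [eval_H_succ m'' n t]
      have hs2 : Real.sqrt 2 * Real.sqrt 2 = 2 := Real.mul_self_sqrt (by norm_num)
      match m'', n with
      | 0, 0 =>
        simp only [show (0:ℕ)-1 = 0 from rfl, if_pos rfl] at hd ⊢
        norm_num at hd IH1 ⊢
        linear_combination (2*t*Real.sqrt 2) * IH1 - hd
      | 0, (n'+1) =>
        have IH2 := ih 0 (by omega) n' t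
        simp only [if_pos rfl, if_neg (Nat.succ_ne_zero n'), Nat.succ_sub_one] at hd
        simp only [Nat.factorial_succ, Nat.factorial_zero] at *
        push_cast at hd IH1 IH2 ⊢
        linear_combination (2*t*Real.sqrt 2) * IH1
          - (((n':ℝ)+1)*(Real.sqrt 2*Real.sqrt 2)) * IH2
          - (((n':ℝ)+1)*(n'.factorial:ℝ)) * hd
          - (((n':ℝ)+1)*(n'.factorial:ℝ)*(DD 0 n' (Real.sqrt 2*t))) * hs2
      | (m'''+1), 0 =>
        have IH3 := ih m''' (by omega) 0 t
        simp only [if_pos rfl, if_neg (Nat.succ_ne_zero m'''), Nat.succ_sub_one] at hd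
        simp only [Nat.factorial_succ, Nat.factorial_zero] at *
        push_cast at hd IH1 IH3 ⊢
        linear_combination (2*t*Real.sqrt 2) * IH1
          - (2*((m''':ℝ)+1)*(Real.sqrt 2*Real.sqrt 2)) * IH3
          - (((m''':ℝ)+1)*(m'''.factorial:ℝ)) * hd
          - (2*((m''':ℝ)+1)*(m'''.factorial:ℝ)*(DD m''' 0 (Real.sqrt 2*t))) * hs2
      | (m'''+1), (n'+1) =>
        have IH2 := ih (m'''+1) (by omega) n' t
        have IH3 := ih m''' (by omega) (n'+1) t
        simp only [if_neg (Nat.succ_ne_zero m'''), if_neg (Nat.succ_ne_zero n'),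
          Nat.succ_sub_one] at hd
        simp only [Nat.factorial_succ] at *
        push_cast at hd IH1 IH2 IH3 ⊢
        linear_combination (2*t*Real.sqrt 2) * IH1
          - (((n':ℝ)+1)*(Real.sqrt 2*Real.sqrt 2)) * IH2
          - (2*((m''':ℝ)+1)*(Real.sqrt 2*Real.sqrt 2)) * IH3
          - (((m''':ℝ)+1)*(m'''.factorial:ℝ)*((n':ℝ)+1)*(n'.factorial:ℝ)) * hd
          - (((m''':ℝ)+1)*((n':ℝ)+1)*(m'''.factorial:ℝ)*(n'.factorial:ℝ)
              * (DD (m'''+1) n' (Real.sqrt 2*t) + 2 * DD m''' (n'+1) (Real.sqrt 2*t))) * hs2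

theorem hmn_expansion_at_zero (m n : ℕ) (t : ℝ) :
    (H m n).eval t =
      (m.factorial : ℝ) * (n.factorial : ℝ) * (1 / Real.sqrt 2) ^ (m + n) *
        ∑ j ∈ range (n + 1), ∑ k ∈ Finset.Icc j m,
          ((-1 : ℝ) ^ j / ((j.factorial : ℝ) * ((k - j).factorial : ℝ))) *
            (H (k - j) 0).eval 0 *
            ((H (m - k) (n - j)).eval (Real.sqrt 2 * t) /
              (((m - k).factorial : ℝ) * ((n - j).factorial : ℝ))) := by
  have hk := key m n t
  have hs0 : Real.sqrt 2 ≠ 0 := by positivity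
  have h1 : (1/Real.sqrt 2)^(m+n) * (Real.sqrt 2)^(m+n) = 1 := by
    rw [← mul_pow, one_div, inv_mul_cancel₀ hs0, one_pow]
  have h2 : (∑ j ∈ range (n + 1), ∑ k ∈ Finset.Icc j m,
          ((-1 : ℝ) ^ j / ((j.factorial : ℝ) * ((k - j).factorial : ℝ))) *
            (H (k - j) 0).eval 0 *
            ((H (m - k) (n - j)).eval (Real.sqrt 2 * t) /
              (((m - k).factorial : ℝ) * ((n - j).factorial : ℝ))))
      = DD m n (Real.sqrt 2 * t) := rfl
  rw [h2]
  calc (H m n).eval t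
      = (1/Real.sqrt 2)^(m+n) * ((Real.sqrt 2)^(m+n) * (H m n).eval t) := by
        rw [← mul_assoc, h1, one_mul]
    _ = (1/Real.sqrt 2)^(m+n) * ((m.factorial : ℝ) * (n.factorial : ℝ)
          * DD m n (Real.sqrt 2 * t)) := by rw [hk]
    _ = _ := by ring
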